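/- arXiv:2406.02175 — 2 statements merged into one kernel-verified Lean document; each statement's English description precedes it below -/
import Mathlib

section
/- For every policy π and every branch l, the value of π from l equals the regularized objective of the sub-DT of π rooted in l: V^π(l) = R(T_l^π) = −λ·splits(T_l^π) + H(T_l^π). -/
open Finset

/-- A branch: for each feature, either unused (`none`) or fixed to a category. -/
abbrev Branch (q : ℕ) (C : Fin q → ℕ) : Type := ∀ i : Fin q, Option (Fin (C i))

/-- States: `Sum.inl l` is the (non-terminal) branch `l`, `Sum.inr l` is its terminal state `l̄`. -/
abbrev BState (q : ℕ) (C : Fin q → ℕ) : Type := Branch q C ⊕ Branch q C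

/-- The root branch `Ω`. -/
def root (q : ℕ) (C : Fin q → ℕ) : Branch q C := fun _ => none

/-- The child of `l` obtained by fixing unused feature `i` to category `j`. -/
def child {q : ℕ} {C : Fin q → ℕ} (l : Branch q C) (i : Fin q) (j : Fin (C i)) : Branch q C :=
  Function.update l i (some j)

/-- `Children(l, i)`. -/
def childrenF {q : ℕ} {C : Fin q → ℕ} (l : Branch q C) (i : Fin q) : Finset (Branch q C) :=
  Finset.univ.image (fun j : Fin (C i) => child l i j)

/-- A policy: `act l = none` is the terminal action `ā`, `act l = some i` splits on the
unused feature `i`. -/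
structure Policy (q : ℕ) (C : Fin q → ℕ) where
  act : Branch q C → Option (Fin q)
  valid : ∀ l i, act l = some i → l i = none

/-- Transition set of the action taken by `π` at branch `l`. -/
def stepSet {q : ℕ} {C : Fin q → ℕ} (π : Policy q C) (l : Branch q C) : Finset (BState q C) :=
  match π.act l with
  | none => {Sum.inr l}
  | some i => (childrenF l i).image Sum.inl

/-- Trajectory of policy `π` from branch `l`. -/
def traj {q : ℕ} {C : Fin q → ℕ} (π : Policy q C) (l : Branch q C) : ℕ → Finset (BState q C)
  | 0 => {Sum.inl l}
  | t + 1 => (traj π l t).biUnion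
      (fun s => Sum.elim (fun lu => stepSet π lu) (fun lu => ({Sum.inr lu} : Finset (BState q C))) s)

/-- `τ_l^π`: minimal time `t ≥ 1` at which the trajectory consists of terminal states only. -/
noncomputable def tau {q : ℕ} {C : Fin q → ℕ} (π : Policy q C) (l : Branch q C) : ℕ :=
  sInf {t : ℕ | 1 ≤ t ∧ ∀ x ∈ traj π l t, x.isRight}

/-- A data point `x` is in branch `l`. -/
def inBranch {q : ℕ} {C : Fin q → ℕ} (l : Branch q C) (x : ∀ i : Fin q, Fin (C i)) : Prop :=
  ∀ (i : Fin q) (c : Fin (C i)), l i = some c → x i = c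

instance {q : ℕ} {C : Fin q → ℕ} (l : Branch q C) (x : ∀ i, Fin (C i)) :
    Decidable (inBranch l x) := by unfold inBranch; infer_instance

/-- `n(l)`: number of data points in `l`. -/
def nIn {q K : ℕ} {C : Fin q → ℕ} (D : Multiset ((∀ i : Fin q, Fin (C i)) × Fin K))
    (l : Branch q C) : ℕ :=
  (D.filter (fun p => inBranch l p.1)).card

/-- `n_k(l)`: number of data points in `l` of class `k`. -/
def nk {q K : ℕ} {C : Fin q → ℕ} (D : Multiset ((∀ i : Fin q, Fin (C i)) × Fin K))
    (l : Branch q C) (k : Fin K) : ℕ :=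
  (D.filter (fun p => inBranch l p.1 ∧ p.2 = k)).card

/-- `H(l) = (max_k n_k(l)) / n`. -/
noncomputable def Hb {q K : ℕ} {C : Fin q → ℕ} (D : Multiset ((∀ i : Fin q, Fin (C i)) × Fin K))
    (l : Branch q C) : ℝ :=
  ((Finset.univ.sup (fun k : Fin K => nk D l k) : ℕ) : ℝ) / (Multiset.card D : ℝ)

/-- Reward collected at a state of the trajectory: `H(l)` for the terminal action,
`-λ` for a split action, `0` at terminal states. -/
noncomputable def rew {q K : ℕ} {C : Fin q → ℕ}
    (D : Multiset ((∀ i : Fin q, Fin (C i)) × Fin K)) (lam : ℝ) (π : Policy q C) :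
    BState q C → ℝ
  | Sum.inl lu => match π.act lu with
      | none => Hb D lu
      | some _ => -lam
  | Sum.inr _ => 0

/-- Value `V^π(l)`. -/
noncomputable def V {q K : ℕ} {C : Fin q → ℕ}
    (D : Multiset ((∀ i : Fin q, Fin (C i)) × Fin K)) (lam : ℝ)
    (π : Policy q C) (l : Branch q C) : ℝ :=
  ∑ t ∈ Finset.range (tau π l), ∑ x ∈ traj π l t, rew D lam π x

/-- State-action value `Q^π(l, a)`. -/
noncomputable def Qv {q K : ℕ} {C : Fin q → ℕ}
    (D : Multiset ((∀ i : Fin q, Fin (C i)) × Fin K)) (lam : ℝ)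
    (π : Policy q C) (l : Branch q C) : Option (Fin q) → ℝ
  | none => Hb D l
  | some i => -lam + ∑ j : Fin (C i), V D lam π (child l i j)

/-- The available actions `A(l)`. -/
def Avail {q : ℕ} {C : Fin q → ℕ} (l : Branch q C) : Finset (Option (Fin q)) :=
  insert none ((Finset.univ.filter (fun i : Fin q => l i = none)).image some)

theorem Avail_nonempty {q : ℕ} {C : Fin q → ℕ} (l : Branch q C) : (Avail l).Nonempty :=
  ⟨none, Finset.mem_insert_self _ _⟩

/-- The sub-DT of `π` rooted in `l`: the branches whose terminal states constitute
the trajectory at time `τ_l^π`. -/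
noncomputable def subDTof {q : ℕ} {C : Fin q → ℕ} (π : Policy q C) (l : Branch q C) : Finset (Branch q C) :=
  (traj π l (tau π l)).image (Sum.elim id id)

/-- `SubDT l T m`: `T` is a sub-DT rooted in `l` obtained by `m` split operations. -/
inductive SubDT {q : ℕ} {C : Fin q → ℕ} : Branch q C → Finset (Branch q C) → ℕ → Prop
  | leaf (l : Branch q C) : SubDT l {l} 0
  | split (l : Branch q C) (T : Finset (Branch q C)) (m : ℕ) (l' : Branch q C) (i : Fin q)
      (hT : SubDT l T m) (hmem : l' ∈ T) (hnone : l' i = none) :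
      SubDT l (T.erase l' ∪ childrenF l' i) (m + 1)

/-- `H(T) = ∑_{l ∈ T} H(l)`. -/
noncomputable def HT {q K : ℕ} {C : Fin q → ℕ}
    (D : Multiset ((∀ i : Fin q, Fin (C i)) × Fin K)) (T : Finset (Branch q C)) : ℝ :=
  ∑ l ∈ T, Hb D l

/-- `splits(l)`: number of features used by branch `l`. -/
def nsplits {q : ℕ} {C : Fin q → ℕ} (l : Branch q C) : ℕ :=
  (Finset.univ.filter (fun i : Fin q => l i ≠ none)).card

section Aux

variable {q K : ℕ} {C : Fin q → ℕ}

/-- `l'` extends `l`: wherever `l` is fixed, `l'` agrees. -/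
def BExt (l l' : Branch q C) : Prop := ∀ i c, l i = some c → l' i = some c

lemma BExt.rfl (l : Branch q C) : BExt l l := fun _ _ h => h

lemma BExt.trans {a b c : Branch q C} (h1 : BExt a b) (h2 : BExt b c) : BExt a c :=
  fun i x h => h2 i x (h1 i x h)

lemma child_self (l : Branch q C) (i : Fin q) (j : Fin (C i)) : child l i j i = some j := by
  simp [child]

lemma child_other (l : Branch q C) {i i' : Fin q} (hne : i' ≠ i) (j : Fin (C i)) :
    child l i j i' = l i' := by
  simp [child, Function.update_of_ne hne]

lemma ext_child {l : Branch q C} {i : Fin q} (h : l i = none) (j : Fin (C i)) :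
    BExt l (child l i j) := by
  intro i' c hc
  rcases eq_or_ne i' i with rfl | hne
  · rw [h] at hc; cases hc
  · rw [child_other l hne]; exact hc

lemma mem_childrenF {l l' : Branch q C} {i : Fin q} :
    l' ∈ childrenF l i ↔ ∃ j, l' = child l i j := by
  simp [childrenF, eq_comm]

lemma child_injective (l : Branch q C) (i : Fin q) : Function.Injective (child l i) := by
  intro j j' h
  have h2 := congrFun h i
  rw [child_self, child_self] at h2
  exact Option.some_injective _ h2

lemma ext_of_mem_stepSet {π : Policy q C} {l : Branch q C} {x : BState q C}
    (hx : x ∈ stepSet π l) : BExt l (Sum.elim id id x) := by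
  unfold stepSet at hx
  cases hact : π.act l with
  | none => rw [hact] at hx; simp only [Finset.mem_singleton] at hx; subst hx; exact BExt.rfl l
  | some i =>
    rw [hact] at hx
    simp only [Finset.mem_image] at hx
    obtain ⟨l', hl', rfl⟩ := hx
    obtain ⟨j, rfl⟩ := mem_childrenF.1 hl'
    exact ext_child (π.valid l i hact) j

lemma traj_succ (π : Policy q C) (l : Branch q C) (t : ℕ) :
    traj π l (t+1) = (traj π l t).biUnion
      (fun s => Sum.elim (fun lu => stepSet π lu)
        (fun lu => ({Sum.inr lu} : Finset (BState q C))) s) := rfl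

lemma ext_of_mem_traj {π : Policy q C} {l : Branch q C} {t : ℕ} {x : BState q C}
    (hx : x ∈ traj π l t) : BExt l (Sum.elim id id x) := by
  induction t generalizing x with
  | zero => simp only [traj, Finset.mem_singleton] at hx; subst hx; exact BExt.rfl l
  | succ t ih =>
    rw [traj_succ, Finset.mem_biUnion] at hx
    obtain ⟨y, hy, hxy⟩ := hx
    cases y with
    | inl lv => exact (ih hy).trans (ext_of_mem_stepSet hxy)
    | inr lv =>
      simp only [Sum.elim_inr, Finset.mem_singleton] at hxy
      subst hxy
      exact ih hy

lemma nsplits_le (l : Branch q C) : nsplits l ≤ q := by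
  classical
  calc nsplits l ≤ (Finset.univ : Finset (Fin q)).card := Finset.card_filter_le _ _
  _ = q := by simp

lemma nsplits_child {l : Branch q C} {i : Fin q} (h : l i = none) (j : Fin (C i)) :
    nsplits (child l i j) = nsplits l + 1 := by
  unfold nsplits
  have he : Finset.univ.filter (fun i' : Fin q => child l i j i' ≠ none)
      = insert i (Finset.univ.filter (fun i' : Fin q => l i' ≠ none)) := by
    ext i'
    rcases eq_or_ne i' i with rfl | hne
    · simp [child_self, h]
    · simp [child_other l hne, hne]
  rw [he, Finset.card_insert_of_notMem (by simp [h])]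

lemma nsplits_ge_of_mem_traj {π : Policy q C} {l lu : Branch q C} {t : ℕ}
    (hx : Sum.inl lu ∈ traj π l t) : t ≤ nsplits lu := by
  induction t generalizing lu with
  | zero => exact Nat.zero_le _
  | succ t ih =>
    rw [traj_succ, Finset.mem_biUnion] at hx
    obtain ⟨y, hy, hxy⟩ := hx
    cases y with
    | inl lv =>
      simp only [Sum.elim_inl] at hxy
      unfold stepSet at hxy
      cases hact : π.act lv with
      | none => rw [hact] at hxy; simp at hxy
      | some i =>
        rw [hact] at hxy
        simp only [Finset.mem_image] at hxy
        obtain ⟨l', hl', hl'e⟩ := hxy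
        obtain ⟨j, rfl⟩ := mem_childrenF.1 hl'
        injection hl'e with h'
        subst h'
        rw [nsplits_child (π.valid lv i hact) j]
        exact Nat.succ_le_succ (ih hy)
    | inr lv =>
      simp only [Sum.elim_inr, Finset.mem_singleton] at hxy
      exact absurd hxy (by simp)

/-- At each time the trajectory is all-terminal or not. -/
lemma traj_stab {π : Policy q C} {l : Branch q C} {t : ℕ}
    (h : ∀ x ∈ traj π l t, x.isRight) : traj π l (t+1) = traj π l t := by
  rw [traj_succ]
  apply Finset.ext
  intro x
  rw [Finset.mem_biUnion]
  constructor
  · rintro ⟨y, hy, hxy⟩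
    cases y with
    | inl lv => exact absurd (h _ hy) (by simp)
    | inr lv =>
      simp only [Sum.elim_inr, Finset.mem_singleton] at hxy
      subst hxy; exact hy
  · intro hx
    refine ⟨x, hx, ?_⟩
    cases x with
    | inl lv => exact absurd (h _ hx) (by simp)
    | inr lv => simp

lemma traj_eq_of_ge {π : Policy q C} {l : Branch q C} {t s : ℕ}
    (h : ∀ x ∈ traj π l t, x.isRight) (hts : t ≤ s) : traj π l s = traj π l t := by
  induction s with
  | zero => rw [Nat.le_zero.mp hts]
  | succ s ih =>
    rcases eq_or_lt_of_le hts with rfl | hlt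
    · rfl
    · have hs : t ≤ s := Nat.lt_succ_iff.mp hlt
      have he := ih hs
      have h' : ∀ x ∈ traj π l s, x.isRight := by
        intro x hx; rw [he] at hx; exact h x hx
      rw [traj_stab h', he]

lemma mem_tauSet {π : Policy q C} (l : Branch q C) :
    (q + 1) ∈ {t : ℕ | 1 ≤ t ∧ ∀ x ∈ traj π l t, x.isRight} := by
  constructor
  · omega
  · intro x hx
    cases x with
    | inl lu =>
      have h1 := nsplits_ge_of_mem_traj hx
      have h2 := nsplits_le lu
      omega
    | inr _ => rfl

lemma tau_spec {π : Policy q C} (l : Branch q C) :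
    1 ≤ tau π l ∧ ∀ x ∈ traj π l (tau π l), x.isRight :=
  Nat.sInf_mem ⟨_, mem_tauSet l⟩

lemma tau_le {π : Policy q C} (l : Branch q C) : tau π l ≤ q + 1 :=
  Nat.sInf_le (mem_tauSet l)

lemma traj_ge_tau {π : Policy q C} {l : Branch q C} {s : ℕ} (hs : tau π l ≤ s) :
    traj π l s = traj π l (tau π l) := traj_eq_of_ge (tau_spec l).2 hs

lemma V_eq_range {π : Policy q C} (D : Multiset ((∀ i : Fin q, Fin (C i)) × Fin K)) (lam : ℝ)
    {l : Branch q C} {N : ℕ} (hN : tau π l ≤ N) :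
    V D lam π l = ∑ t ∈ Finset.range N, ∑ x ∈ traj π l t, rew D lam π x := by
  unfold V
  refine Finset.sum_subset (Finset.range_subset_range.mpr hN) ?_
  intro t _ hnt
  simp only [Finset.mem_range, not_lt] at hnt
  rw [traj_eq_of_ge (tau_spec l).2 hnt]
  apply Finset.sum_eq_zero
  intro x hx
  have hr := (tau_spec (π := π) l).2 x hx
  cases x with
  | inl _ => simp at hr
  | inr _ => simp [rew]

end Aux

section Aux2

variable {q K : ℕ} {C : Fin q → ℕ}

/-- Two branches are incompatible: they fix some feature to different values. -/
def Incomp (x y : Branch q C) : Prop :=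
  ∃ i a b, x i = some a ∧ y i = some b ∧ a ≠ b

lemma Incomp.symm {x y : Branch q C} (h : Incomp x y) : Incomp y x := by
  obtain ⟨i, a, b, h1, h2, hab⟩ := h
  exact ⟨i, b, a, h2, h1, hab.symm⟩

lemma incomp_of_ext {x y z : Branch q C} (h : Incomp x y) (he : BExt y z) : Incomp x z := by
  obtain ⟨i, a, b, h1, h2, hab⟩ := h
  exact ⟨i, a, b, h1, he i b h2, hab⟩

lemma incomp_irrefl_ext {x y : Branch q C} (he : BExt x y) (h : Incomp y x) : False := by
  obtain ⟨i, a, b, h1, h2, hab⟩ := h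
  rw [he i b h2] at h1
  exact hab (Option.some_injective _ h1.symm)

lemma subDT_ext {l : Branch q C} {T : Finset (Branch q C)} {m : ℕ} (h : SubDT l T m) :
    ∀ x ∈ T, BExt l x := by
  induction h with
  | leaf =>
    intro x hx
    rw [Finset.mem_singleton] at hx; subst hx; exact fun _ _ h => h
  | split T m l' i hT hmem hnone ih =>
    intro x hx
    rw [Finset.mem_union] at hx
    rcases hx with hx | hx
    · exact ih x (Finset.mem_of_mem_erase hx)
    · obtain ⟨j, rfl⟩ := mem_childrenF.1 hx
      exact (ih l' hmem).trans (ext_child hnone j)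

lemma subDT_pairwise {l : Branch q C} {T : Finset (Branch q C)} {m : ℕ} (h : SubDT l T m) :
    ∀ x ∈ T, ∀ y ∈ T, x ≠ y → Incomp x y := by
  induction h with
  | leaf =>
    intro x hx y hy hxy
    rw [Finset.mem_singleton] at hx hy
    subst hx; subst hy; exact absurd rfl hxy
  | split T m l' i hT hmem hnone ih =>
    intro x hx y hy hxy
    rw [Finset.mem_union] at hx hy
    have hch : ∀ z ∈ T, z ≠ l' → ∀ j : Fin (C i), Incomp z (child l' i j) := by
      intro z hz hzl j
      exact incomp_of_ext (ih z hz l' hmem hzl) (ext_child hnone j)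
    rcases hx with hx | hx <;> rcases hy with hy | hy
    · exact ih x (Finset.mem_of_mem_erase hx) y (Finset.mem_of_mem_erase hy) hxy
    · obtain ⟨j, rfl⟩ := mem_childrenF.1 hy
      exact hch x (Finset.mem_of_mem_erase hx) (Finset.ne_of_mem_erase hx) j
    · obtain ⟨j, rfl⟩ := mem_childrenF.1 hx
      exact (hch y (Finset.mem_of_mem_erase hy) (Finset.ne_of_mem_erase hy) j).symm
    · obtain ⟨j, rfl⟩ := mem_childrenF.1 hx
      obtain ⟨j', rfl⟩ := mem_childrenF.1 hy
      have hjj : j ≠ j' := by rintro rfl; exact hxy rfl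
      exact ⟨i, j, j', child_self _ _ _, child_self _ _ _, hjj⟩

lemma subDT_graft {l' : Branch q C} {T' : Finset (Branch q C)} {m' : ℕ} (h' : SubDT l' T' m') :
    ∀ {l : Branch q C} {T : Finset (Branch q C)} {m : ℕ}, SubDT l T m → l' ∈ T →
    SubDT l (T.erase l' ∪ T') (m + m') := by
  induction h' with
  | leaf =>
    intro l T m h hmem
    have he : T.erase l' ∪ {l'} = T := by
      ext x
      simp only [Finset.mem_union, Finset.mem_erase, Finset.mem_singleton]
      constructor
      · rintro (⟨_, hx⟩ | rfl)
        · exact hx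
        · exact hmem
      · intro hx
        rcases eq_or_ne x l' with rfl | hne
        · exact Or.inr rfl
        · exact Or.inl ⟨hne, hx⟩
    rw [he]; exact h
  | split T0 m0 l'' i hT0 hmem0 hnone ih =>
    intro l T m h hmem
    have hrec : SubDT l (T.erase l' ∪ T0) (m + m0) := ih h hmem
    have hmem'' : l'' ∈ T.erase l' ∪ T0 := Finset.mem_union_right _ hmem0
    have hnotin : l'' ∉ T.erase l' := by
      intro hin
      exact incomp_irrefl_ext (subDT_ext hT0 l'' hmem0)
        (subDT_pairwise h l'' (Finset.mem_of_mem_erase hin) l' hmem (Finset.ne_of_mem_erase hin))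
    have hset : (T.erase l' ∪ T0).erase l'' ∪ childrenF l'' i
        = T.erase l' ∪ (T0.erase l'' ∪ childrenF l'' i) := by
      rw [Finset.erase_union_distrib, Finset.erase_eq_of_notMem hnotin, Finset.union_assoc]
    have hres := SubDT.split l (T.erase l' ∪ T0) (m + m0) l'' i hrec hmem'' hnone
    rw [hset] at hres
    exact hres

lemma subDT_children {l : Branch q C} {i : Fin q} (hnone : l i = none) :
    SubDT l (childrenF l i) 1 := by
  have h := SubDT.split l {l} 0 l i (SubDT.leaf l) (Finset.mem_singleton_self l) hnone
  simpa using h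

lemma subDT_glue {l : Branch q C} {i : Fin q} (hnone : l i = none)
    (T : Fin (C i) → Finset (Branch q C)) (m : Fin (C i) → ℕ)
    (hT : ∀ j, SubDT (child l i j) (T j) (m j)) :
    SubDT l (Finset.univ.biUnion T) (1 + ∑ j, m j) := by
  classical
  have hTx : ∀ j, ∀ x ∈ T j, BExt (child l i j) x := fun j => subDT_ext (hT j)
  have main : ∀ s : Finset (Fin (C i)),
      SubDT l (((Finset.univ \ s).image (child l i)) ∪ s.biUnion T) (1 + ∑ j ∈ s, m j) := by
    intro s
    induction s using Finset.induction with
    | empty => simpa [childrenF] using subDT_children hnone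
    | @insert j s hj ih =>
      have hmemc : child l i j ∈ ((Finset.univ \ s).image (child l i)) ∪ s.biUnion T :=
        Finset.mem_union_left _ (Finset.mem_image_of_mem _ (by simp [hj]))
      have hg := subDT_graft (hT j) ih hmemc
      have key : ∀ j'' ∈ s, child l i j ∉ T j'' := by
        intro j'' hj'' hmem'
        have hx := hTx j'' _ hmem' i j'' (child_self l i j'')
        rw [child_self] at hx
        have : j = j'' := Option.some_injective _ hx
        subst this
        exact hj hj''
      have hset : ((((Finset.univ \ s).image (child l i)) ∪ s.biUnion T).erase (child l i j)) ∪ T j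
          = ((Finset.univ \ insert j s).image (child l i)) ∪ (insert j s).biUnion T := by
        ext x
        simp only [Finset.mem_union, Finset.mem_erase, Finset.mem_image, Finset.mem_biUnion,
          Finset.mem_sdiff, Finset.mem_univ, true_and, Finset.mem_insert]
        constructor
        · rintro (⟨hne, (⟨j', hj's, rfl⟩ | ⟨j'', hj''s, hx⟩)⟩ | hx)
          · refine Or.inl ⟨j', ?_, rfl⟩
            rintro (rfl | hc)
            · exact hne rfl
            · exact hj's hc
          · exact Or.inr ⟨j'', Or.inr hj''s, hx⟩
          · exact Or.inr ⟨j, Or.inl rfl, hx⟩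
        · rintro (⟨j', hj', rfl⟩ | ⟨j'', hj'', hx⟩)
          · refine Or.inl ⟨?_, Or.inl ⟨j', fun hc => hj' (Or.inr hc), rfl⟩⟩
            intro hc
            exact hj' (Or.inl (child_injective l i hc))
          · rcases hj'' with rfl | hj''s
            · exact Or.inr hx
            · refine Or.inl ⟨?_, Or.inr ⟨j'', hj''s, hx⟩⟩
              rintro rfl
              exact key j'' hj''s hx
      rw [hset] at hg
      have harith : 1 + ∑ j' ∈ s, m j' + m j = 1 + ∑ j' ∈ insert j s, m j' := by
        rw [Finset.sum_insert hj]
        omega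
      rw [harith] at hg
      exact hg
  have h := main Finset.univ
  simpa using h

end Aux2

section Aux3

variable {q K : ℕ} {C : Fin q → ℕ}

lemma traj_one_none {π : Policy q C} {l : Branch q C} (h : π.act l = none) :
    traj π l 1 = {Sum.inr l} := by
  rw [traj_succ]
  show ({Sum.inl l} : Finset (BState q C)).biUnion _ = _
  rw [Finset.singleton_biUnion]
  simp [stepSet, h]

lemma tau_eq_one {π : Policy q C} {l : Branch q C} (h : π.act l = none) : tau π l = 1 := by
  refine le_antisymm (Nat.sInf_le ⟨le_refl 1, ?_⟩) (tau_spec l).1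
  rw [traj_one_none h]
  intro x hx
  rw [Finset.mem_singleton] at hx
  subst hx; rfl

lemma subDTof_none {π : Policy q C} {l : Branch q C} (h : π.act l = none) :
    subDTof π l = {l} := by
  unfold subDTof
  rw [tau_eq_one h, traj_one_none h]
  simp

lemma traj_decomp {π : Policy q C} {l : Branch q C} {i : Fin q} (h : π.act l = some i) (t : ℕ) :
    traj π l (t+1) = Finset.univ.biUnion (fun j : Fin (C i) => traj π (child l i j) t) := by
  induction t with
  | zero =>
    rw [traj_succ]
    show ({Sum.inl l} : Finset (BState q C)).biUnion _ = _
    rw [Finset.singleton_biUnion]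
    simp only [Sum.elim_inl]
    unfold stepSet childrenF
    rw [h]
    ext x
    simp only [Finset.mem_image, Finset.mem_biUnion, Finset.mem_univ, true_and, traj,
      Finset.mem_singleton]
    constructor
    · rintro ⟨a, ⟨j, rfl⟩, rfl⟩
      exact ⟨j, rfl⟩
    · rintro ⟨j, rfl⟩
      exact ⟨child l i j, ⟨j, rfl⟩, rfl⟩
  | succ t ih =>
    rw [traj_succ, ih, Finset.biUnion_biUnion]
    rfl

lemma traj_child_disjoint {π : Policy q C} {l : Branch q C} {i : Fin q} {j j' : Fin (C i)}
    (hjj : j ≠ j') {t t' : ℕ} :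
    Disjoint (traj π (child l i j) t) (traj π (child l i j') t') := by
  rw [Finset.disjoint_left]
  intro x hx hx'
  have h1 := ext_of_mem_traj hx i j (child_self l i j)
  have h2 := ext_of_mem_traj hx' i j' (child_self l i j')
  rw [h1] at h2
  exact hjj (Option.some_injective _ h2)

lemma V_split {π : Policy q C} (D : Multiset ((∀ i : Fin q, Fin (C i)) × Fin K)) (lam : ℝ)
    {l : Branch q C} {i : Fin q} (h : π.act l = some i) :
    V D lam π l = -lam + ∑ j : Fin (C i), V D lam π (child l i j) := by
  have hτ : tau π l ≤ (q + 1) + 1 := le_trans (tau_le l) (by omega)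
  rw [V_eq_range D lam hτ, Finset.sum_range_succ']
  have h0 : ∑ x ∈ traj π l 0, rew D lam π x = -lam := by
    show ∑ x ∈ ({Sum.inl l} : Finset (BState q C)), rew D lam π x = -lam
    rw [Finset.sum_singleton]
    simp [rew, h]
  rw [h0]
  have hdec : ∀ t, ∑ x ∈ traj π l (t+1), rew D lam π x
      = ∑ j : Fin (C i), ∑ x ∈ traj π (child l i j) t, rew D lam π x := by
    intro t
    rw [traj_decomp h t]
    exact Finset.sum_biUnion (fun j _ j' _ hjj => traj_child_disjoint hjj)
  rw [Finset.sum_congr rfl (fun t _ => hdec t), Finset.sum_comm, add_comm]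
  congr 1
  refine Finset.sum_congr rfl fun j _ => ?_
  exact (V_eq_range D lam (tau_le _)).symm

lemma image_biUnion' {α β γ : Type*} [DecidableEq α] [DecidableEq β] [DecidableEq γ]
    (s : Finset α) (t : α → Finset β) (f : β → γ) :
    (s.biUnion t).image f = s.biUnion (fun a => (t a).image f) := by
  ext x
  simp only [Finset.mem_image, Finset.mem_biUnion]
  constructor
  · rintro ⟨a, ⟨b, hb, ha⟩, rfl⟩
    exact ⟨b, hb, a, ha, rfl⟩
  · rintro ⟨b, hb, a, ha, rfl⟩
    exact ⟨a, ⟨b, hb, ha⟩, rfl⟩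

lemma subDTof_split {π : Policy q C} {l : Branch q C} {i : Fin q} (h : π.act l = some i) :
    subDTof π l = Finset.univ.biUnion (fun j : Fin (C i) => subDTof π (child l i j)) := by
  unfold subDTof
  have h1 : traj π l (tau π l) = traj π l ((q+1)+1) :=
    (traj_ge_tau (le_trans (tau_le l) (by omega))).symm
  rw [h1, traj_decomp h, image_biUnion']
  exact Finset.biUnion_congr rfl (fun j _ => by rw [traj_ge_tau (tau_le _)])

lemma ext_of_mem_subDTof {π : Policy q C} {l x : Branch q C} (hx : x ∈ subDTof π l) :
    BExt l x := by
  unfold subDTof at hx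
  rw [Finset.mem_image] at hx
  obtain ⟨y, hy, rfl⟩ := hx
  exact ext_of_mem_traj hy

lemma subDTof_child_disjoint {π : Policy q C} {l : Branch q C} {i : Fin q} {j j' : Fin (C i)}
    (hjj : j ≠ j') : Disjoint (subDTof π (child l i j)) (subDTof π (child l i j')) := by
  rw [Finset.disjoint_left]
  intro x hx hx'
  have h1 := ext_of_mem_subDTof hx i j (child_self l i j)
  have h2 := ext_of_mem_subDTof hx' i j' (child_self l i j')
  rw [h1] at h2
  exact hjj (Option.some_injective _ h2)

lemma HT_split {π : Policy q C} (D : Multiset ((∀ i : Fin q, Fin (C i)) × Fin K))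
    {l : Branch q C} {i : Fin q} (h : π.act l = some i) :
    HT D (subDTof π l) = ∑ j : Fin (C i), HT D (subDTof π (child l i j)) := by
  rw [subDTof_split h]
  exact Finset.sum_biUnion (fun j _ j' _ hjj => subDTof_child_disjoint hjj)

lemma main_none {π : Policy q C} (D : Multiset ((∀ i : Fin q, Fin (C i)) × Fin K)) (lam : ℝ)
    {l : Branch q C} (h : π.act l = none) :
    ∃ m : ℕ, SubDT l (subDTof π l) m ∧
      V D lam π l = -lam * m + HT D (subDTof π l) := by
  refine ⟨0, ?_, ?_⟩
  · rw [subDTof_none h]; exact SubDT.leaf l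
  · rw [subDTof_none h]
    have hV : V D lam π l = Hb D l := by
      rw [V_eq_range D lam (le_of_eq (tau_eq_one h))]
      rw [Finset.sum_range_one]
      show ∑ x ∈ ({Sum.inl l} : Finset (BState q C)), rew D lam π x = Hb D l
      rw [Finset.sum_singleton]
      simp [rew, h]
    rw [hV]
    simp [HT]

lemma nsplits_lt {l : Branch q C} {i : Fin q} (h : l i = none) : nsplits l < q := by
  have hss : Finset.univ.filter (fun i' : Fin q => l i' ≠ none) ⊂ Finset.univ :=
    (Finset.ssubset_iff_of_subset (Finset.subset_univ _)).mpr
      ⟨i, Finset.mem_univ i, by simp [h]⟩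
  have hlt := Finset.card_lt_card hss
  simpa [nsplits] using hlt

end Aux3

/-- `V^π(l) = R(T_l^π) = -λ·splits(T_l^π) + H(T_l^π)`:
the sub-DT of `π` rooted in `l` is a sub-DT rooted in `l` (with some number of
splits `m`), and the value of `π` from `l` equals its regularized objective. -/
theorem value_eq_regularized_objective {q K : ℕ} (hq : 2 ≤ q) (hK : 2 ≤ K)
    {C : Fin q → ℕ} (hC : ∀ i, 2 ≤ C i)
    (D : Multiset ((∀ i : Fin q, Fin (C i)) × Fin K)) (hD : D ≠ 0)
    (lam : ℝ) (hlam0 : 0 < lam) (hlam1 : lam < 1)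
    (π : Policy q C) (l : Branch q C) :
    ∃ m : ℕ, SubDT l (subDTof π l) m ∧
      V D lam π l = -lam * m + HT D (subDTof π l) := by
  clear hq hK hC hD hlam0 hlam1
  suffices H : ∀ n : ℕ, ∀ l : Branch q C, q - nsplits l ≤ n →
      ∃ m : ℕ, SubDT l (subDTof π l) m ∧
        V D lam π l = -lam * (m : ℝ) + HT D (subDTof π l) by
    exact H q l (Nat.sub_le q _)
  intro n
  induction n with
  | zero =>
    intro l hl
    cases hact : π.act l with
    | none => exact main_none D lam hact
    | some i =>
      have hlt := nsplits_lt (π.valid l i hact)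
      omega
  | succ n ih =>
    intro l hl
    cases hact : π.act l with
    | none => exact main_none D lam hact
    | some i =>
      have hnone := π.valid l i hact
      have hlt := nsplits_lt hnone
      choose m hS hV using fun j : Fin (C i) =>
        ih (child l i j) (by rw [nsplits_child hnone]; omega)
      refine ⟨1 + ∑ j, m j, ?_, ?_⟩
      · rw [subDTof_split hact]
        exact subDT_glue hnone _ m hS
      · rw [V_split D lam hact, HT_split D hact,
          Finset.sum_congr rfl (fun j (_ : j ∈ Finset.univ) => hV j),
          Finset.sum_add_distrib]
        push_cast
        rw [mul_add, Finset.mul_sum]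
        simp only [neg_mul]
        ring
end

section
/- For every branch l and every sub-DT T rooted in l, the accuracy contribution of T is bounded by the mass of l: H(T) = ∑_{l_u ∈ T} H(l_u) ≤ n(l)/n; consequently, the regularized objective satisfies R(T) ≤ max{ H(l), −λ + n(l)/n }. -/
open Finset

lemma fiber_card_sum {α β : Type*} [Fintype β] [DecidableEq β]
    (E : Multiset α) (f : α → β) :
    ∑ j : β, (E.filter (fun p => f p = j)).card = Multiset.card E := by
  induction E using Multiset.induction_on with
  | empty => simp
  | cons a s ih =>
    simp only [Multiset.filter_cons, Multiset.card_add, Finset.sum_add_distrib, ih,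
      Multiset.card_cons]
    have : ∑ j : β, Multiset.card (if f a = j then ({a} : Multiset α) else 0)
        = 1 := by
      rw [Finset.sum_eq_single (f a)]
      · simp
      · intro b _ hb; simp [Ne.symm hb]
      · simp
    omega

lemma child_inBranch {q : ℕ} {C : Fin q → ℕ} (l : Branch q C) (i : Fin q)
    (hi : l i = none) (j : Fin (C i)) (x : ∀ i, Fin (C i)) :
    inBranch (child l i j) x ↔ inBranch l x ∧ x i = j := by
  constructor
  · intro h
    refine ⟨fun i' c hc => ?_, h i j (by simp [child])⟩
    by_cases hii : i' = i
    · subst hii; rw [hi] at hc; exact absurd hc (by simp)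
    · exact h i' c (by simpa [child, Function.update_of_ne hii] using hc)
  · rintro ⟨h, hx⟩ i' c hc
    by_cases hii : i' = i
    · subst hii; simp [child] at hc; rw [hx, hc]
    · exact h i' c (by simpa [child, Function.update_of_ne hii] using hc)

lemma nIn_children {q K : ℕ} {C : Fin q → ℕ}
    (D : Multiset ((∀ i : Fin q, Fin (C i)) × Fin K))
    (l : Branch q C) (i : Fin q) (hi : l i = none) :
    ∑ j : Fin (C i), nIn D (child l i j) = nIn D l := by
  have h : ∀ j : Fin (C i), nIn D (child l i j)
      = ((D.filter (fun p => inBranch l p.1)).filter (fun p => p.1 i = j)).card := by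
    intro j
    rw [nIn, Multiset.filter_filter]
    congr 1
    apply Multiset.filter_congr
    intro p _
    simp only [child_inBranch l i hi j p.1]
    tauto
  simp only [h]
  exact fiber_card_sum _ _

lemma child_inj {q : ℕ} {C : Fin q → ℕ} (l : Branch q C) (i : Fin q) :
    Function.Injective (child l i) := by
  intro a b hab
  have := congrFun hab i
  simpa [child] using this

lemma sum_childrenF {q : ℕ} {C : Fin q → ℕ} {M : Type*} [AddCommMonoid M]
    (l : Branch q C) (i : Fin q) (f : Branch q C → M) :
    ∑ c ∈ childrenF l i, f c = ∑ j : Fin (C i), f (child l i j) := by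
  rw [childrenF, Finset.sum_image]
  intro a _ b _ hab
  exact child_inj l i hab

lemma subDT_nIn_sum {q K : ℕ} {C : Fin q → ℕ}
    (D : Multiset ((∀ i : Fin q, Fin (C i)) × Fin K))
    {l : Branch q C} {T : Finset (Branch q C)} {m : ℕ} (hT : SubDT l T m) :
    ∑ l' ∈ T, nIn D l' ≤ nIn D l := by
  induction hT with
  | leaf => simp
  | split T m l' i hT hmem hnone ih =>
    have hui := Finset.sum_union_inter (s₁ := T.erase l') (s₂ := childrenF l' i) (f := nIn D)
    have h2 : ∑ u ∈ childrenF l' i, nIn D u = nIn D l' := by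
      rw [sum_childrenF, nIn_children D l' i hnone]
    have h3 : ∑ u ∈ T.erase l', nIn D u + nIn D l' = ∑ u ∈ T, nIn D u :=
      Finset.sum_erase_add _ _ hmem
    omega

lemma nk_le_nIn {q K : ℕ} {C : Fin q → ℕ}
    (D : Multiset ((∀ i : Fin q, Fin (C i)) × Fin K)) (l : Branch q C) (k : Fin K) :
    nk D l k ≤ nIn D l := by
  apply Multiset.card_le_card
  apply Multiset.monotone_filter_right
  intro p hp
  exact hp.1

lemma Hb_le {q K : ℕ} {C : Fin q → ℕ}
    (D : Multiset ((∀ i : Fin q, Fin (C i)) × Fin K)) (l : Branch q C) :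
    Hb D l ≤ (nIn D l : ℝ) / (Multiset.card D : ℝ) := by
  unfold Hb
  have h : Finset.univ.sup (nk D l) ≤ nIn D l := Finset.sup_le fun k _ => nk_le_nIn D l k
  exact div_le_div_of_nonneg_right (by exact_mod_cast h) (Nat.cast_nonneg _)

lemma subDT_zero {q : ℕ} {C : Fin q → ℕ} {l : Branch q C} {T : Finset (Branch q C)}
    (h : SubDT l T 0) : T = {l} := by cases h; rfl

/-- For every branch `l` and every sub-DT `T` rooted in `l`:
`H(T) ≤ n(l)/n` and `R(T) ≤ max { H(l), -λ + n(l)/n }`. -/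
theorem subDT_accuracy_bound {q K : ℕ} (hq : 2 ≤ q) (hK : 2 ≤ K)
    {C : Fin q → ℕ} (hC : ∀ i, 2 ≤ C i)
    (D : Multiset ((∀ i : Fin q, Fin (C i)) × Fin K)) (hD : D ≠ 0)
    (lam : ℝ) (hlam0 : 0 < lam) (hlam1 : lam < 1)
    (l : Branch q C) (T : Finset (Branch q C)) (m : ℕ) (hT : SubDT l T m) :
    HT D T ≤ (nIn D l : ℝ) / (Multiset.card D : ℝ) ∧
    -lam * m + HT D T ≤ max (Hb D l) (-lam + (nIn D l : ℝ) / (Multiset.card D : ℝ)) := by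
  have hn : (0 : ℝ) < (Multiset.card D : ℝ) := by
    have : D.card ≠ 0 := fun h => hD (Multiset.card_eq_zero.mp h)
    positivity
  have h1 : HT D T ≤ (nIn D l : ℝ) / (Multiset.card D : ℝ) := by
    calc HT D T ≤ ∑ l' ∈ T, (nIn D l' : ℝ) / (Multiset.card D : ℝ) :=
          Finset.sum_le_sum fun l' _ => Hb_le D l'
      _ = ((∑ l' ∈ T, nIn D l' : ℕ) : ℝ) / (Multiset.card D : ℝ) := by
          rw [← Finset.sum_div]; norm_num
      _ ≤ (nIn D l : ℝ) / (Multiset.card D : ℝ) := by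
          apply div_le_div_of_nonneg_right ?_ hn.le |>.trans_eq rfl
          exact_mod_cast subDT_nIn_sum D hT
  refine ⟨h1, ?_⟩
  match m with
  | 0 =>
    rw [subDT_zero hT]
    simp only [Nat.cast_zero, mul_zero, neg_zero, zero_add, HT, Finset.sum_singleton]
    exact le_max_left _ _
  | m + 1 =>
    refine le_trans ?_ (le_max_right _ _)
    have : -lam * (m + 1 : ℕ) ≤ -lam := by
      rw [neg_mul]
      have : lam ≤ lam * (m + 1 : ℕ) := by
        nth_rewrite 1 [← mul_one lam]
        apply mul_le_mul_of_nonneg_left ?_ hlam0.le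
        exact_mod_cast Nat.one_le_iff_ne_zero.mpr (Nat.succ_ne_zero m)
      linarith
    linarith
end
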